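/- Let D₁, D₂ > 0, u* > 0 and ε ≥ 0 be real numbers. With the coefficients a₁ = a₂ = π/2, c₁ = πD₁/(2(D₁+D₂)), c₂ = πD₂/(2(D₁+D₂)), b₁ = π(D₁+2D₂)/(2(D₁+D₂)), b₂ = π(D₂+2D₁)/(2(D₁+D₂)), let 𝔇 be the 2×2 real matrix with entries 𝔇₁₁ = D₁(1 + ε a₁ u* − ε c₁ u*), 𝔇₁₂ = ε D₁ b₁ u*, 𝔇₂₁ = ε D₂ b₂ u*, 𝔇₂₂ = D₂(1 + ε a₂ u* − ε c₂ u*), and set θ = (D₁ − D₂)²/(4 D₁ D₂). If ε < (1 + √(9 + 4θ)) / ((2 + θ) π u*), then the symmetrized matrix Sym(𝔇) = (𝔇 + 𝔇ᵀ)/2 is positive definite (in particular det(Sym(𝔇)) > 0, so Sym(𝔇) is non-degenerate). -/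

import Mathlib

open Matrix

lemma posDef_fin_two_aux {a b c : ℝ} (ha : 0 < a) (hd : 0 < a * c - b ^ 2) :
    (!![a, b; b, c] : Matrix (Fin 2) (Fin 2) ℝ).PosDef := by
  have hc : 0 < c := by nlinarith [sq_nonneg b]
  refine Matrix.posDef_iff_dotProduct_mulVec.mpr ⟨?_, fun x hx => ?_⟩
  · ext i j
    fin_cases i <;> fin_cases j <;> simp [Matrix.conjTranspose_apply]
  · have hx' : x 0 ≠ 0 ∨ x 1 ≠ 0 := by
      by_contra h
      push_neg at h
      exact hx (funext fun i => by fin_cases i <;> simp [h.1, h.2])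
    simp only [dotProduct, Matrix.mulVec, Fin.sum_univ_two, star_trivial, RCLike.re_to_real,
      Matrix.cons_val_zero, Matrix.cons_val_one, Matrix.head_cons, Matrix.of_apply,
      Matrix.cons_val', Matrix.empty_val', Matrix.cons_val_fin_one, Matrix.vecHead,
      Matrix.vecTail]
    rcases hx' with h | h
    · have h0 : 0 < (x 0) ^ 2 := by positivity
      nlinarith [sq_nonneg (c * x 1 + b * x 0), mul_pos hd h0]
    · have h1 : 0 < (x 1) ^ 2 := by positivity
      nlinarith [sq_nonneg (a * x 0 + b * x 1), mul_pos hd h1]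

lemma tr_two_aux (a b c d : ℝ) : (!![a, b; c, d] : Matrix (Fin 2) (Fin 2) ℝ)ᵀ = !![a, c; b, d] := by
  ext i j
  fin_cases i <;> fin_cases j <;> simp [Matrix.transpose_apply]

lemma sym_two_aux (a b c d : ℝ) :
    (1 / 2 : ℝ) • ((!![a, b; c, d] : Matrix (Fin 2) (Fin 2) ℝ) + (!![a, b; c, d])ᵀ)
      = !![a, (b + c) / 2; (b + c) / 2, d] := by
  rw [tr_two_aux]
  ext i j
  fin_cases i <;> fin_cases j <;>
    simp [Matrix.smul_apply, Matrix.add_apply] <;> ring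

set_option maxHeartbeats 1000000 in
/-- If `ε < ε* = (1 + √(9+4θ))/((2+θ)πu*)`, then the symmetrized diffusion matrix of the
Bruna–Chapman cross-diffusion model (d = 2, equal particle numbers and sizes), evaluated
at `u₁ = u₂ = u* > 0`, is positive definite; in particular its determinant is positive,
so it is non-degenerate. Here `θ = (D₁−D₂)²/(4D₁D₂)`. -/
theorem sym_diffusion_posDef_of_lt (D₁ D₂ eps ustar : ℝ)
    (hD₁ : 0 < D₁) (hD₂ : 0 < D₂) (hustar : 0 < ustar) (heps : 0 ≤ eps)
    (a₁ a₂ c₁ c₂ b₁ b₂ θ : ℝ)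
    (ha₁ : a₁ = Real.pi / 2) (ha₂ : a₂ = Real.pi / 2)
    (hc₁ : c₁ = Real.pi * D₁ / (2 * (D₁ + D₂)))
    (hc₂ : c₂ = Real.pi * D₂ / (2 * (D₁ + D₂)))
    (hb₁ : b₁ = Real.pi * (D₁ + 2 * D₂) / (2 * (D₁ + D₂)))
    (hb₂ : b₂ = Real.pi * (D₂ + 2 * D₁) / (2 * (D₁ + D₂)))
    (hθ : θ = (D₁ - D₂) ^ 2 / (4 * D₁ * D₂))
    (𝔇 : Matrix (Fin 2) (Fin 2) ℝ)
    (h𝔇 : 𝔇 = !![D₁ * (1 + eps * a₁ * ustar - eps * c₁ * ustar), eps * D₁ * b₁ * ustar;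
                  eps * D₂ * b₂ * ustar, D₂ * (1 + eps * a₂ * ustar - eps * c₂ * ustar)])
    (hlt : eps < (1 + Real.sqrt (9 + 4 * θ)) / ((2 + θ) * Real.pi * ustar)) :
    ((1 / 2 : ℝ) • (𝔇 + 𝔇ᵀ)).PosDef ∧ 0 < ((1 / 2 : ℝ) • (𝔇 + 𝔇ᵀ)).det := by
  subst ha₁ ha₂ hc₁ hc₂ hb₁ hb₂
  have hπ := Real.pi_pos
  have hs : (0:ℝ) < D₁ + D₂ := by linarith
  have hs' : (D₁ + D₂ : ℝ) ≠ 0 := ne_of_gt hs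
  have hθ0 : 0 ≤ θ := by rw [hθ]; positivity
  have hR0 : 0 ≤ Real.sqrt (9 + 4 * θ) := Real.sqrt_nonneg _
  have hR2 : Real.sqrt (9 + 4 * θ) ^ 2 = 9 + 4 * θ := Real.sq_sqrt (by linarith)
  have hR1 : 1 ≤ Real.sqrt (9 + 4 * θ) := by nlinarith
  have hden : 0 < (2 + θ) * Real.pi * ustar := by positivity
  have hp' : eps * ((2 + θ) * Real.pi * ustar) < 1 + Real.sqrt (9 + 4 * θ) :=
    (lt_div_iff₀ hden).mp hlt
  have hp0 : 0 ≤ eps * Real.pi * ustar := by positivity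
  have hpth : eps * Real.pi * ustar * (2 + θ) < 1 + Real.sqrt (9 + 4 * θ) := by
    rw [show eps * Real.pi * ustar * (2 + θ) = eps * ((2 + θ) * Real.pi * ustar) from by ring]
    exact hp'
  have keyθ : (2 + θ) * (eps * Real.pi * ustar) ^ 2 < 4 + 2 * (eps * Real.pi * ustar) := by
    have h1 := mul_le_mul_of_nonneg_right hpth.le hp0
    have h2 := mul_le_mul_of_nonneg_right hpth.le (by linarith : (0:ℝ) ≤ Real.sqrt (9 + 4 * θ) - 1)
    nlinarith [hpth, hp0, hR1, hR2, hθ0]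
  have hq : (0:ℝ) < D₁ * D₂ := mul_pos hD₁ hD₂
  have hθq : θ * (4 * D₁ * D₂) = (D₁ - D₂) ^ 2 := by
    rw [hθ]; field_simp
  have key : (D₁ ^ 2 + D₂ ^ 2 + 6 * D₁ * D₂) * (eps * Real.pi * ustar) ^ 2
      < 16 * D₁ * D₂ + 8 * D₁ * D₂ * (eps * Real.pi * ustar) := by
    have h4 := mul_lt_mul_of_pos_right keyθ (by positivity : (0:ℝ) < 4 * D₁ * D₂)
    have h5 : θ * (4 * D₁ * D₂) * (eps * Real.pi * ustar) ^ 2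
        = (D₁ - D₂) ^ 2 * (eps * Real.pi * ustar) ^ 2 := by rw [hθq]
    nlinarith [h4, h5]
  have hApos : 0 < D₁ * (1 + eps * (Real.pi / 2) * ustar
      - eps * (Real.pi * D₁ / (2 * (D₁ + D₂))) * ustar) := by
    have h5 : Real.pi * D₁ / (2 * (D₁ + D₂)) ≤ Real.pi / 2 := by
      rw [div_le_div_iff₀ (by positivity) (by norm_num : (0:ℝ) < 2)]
      nlinarith
    have h6 : eps * (Real.pi * D₁ / (2 * (D₁ + D₂))) * ustar ≤ eps * (Real.pi / 2) * ustar :=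
      mul_le_mul_of_nonneg_right (mul_le_mul_of_nonneg_left h5 heps) hustar.le
    nlinarith
  have hdet : 0 < D₁ * (1 + eps * (Real.pi / 2) * ustar
        - eps * (Real.pi * D₁ / (2 * (D₁ + D₂))) * ustar)
      * (D₂ * (1 + eps * (Real.pi / 2) * ustar
        - eps * (Real.pi * D₂ / (2 * (D₁ + D₂))) * ustar))
      - ((eps * D₁ * (Real.pi * (D₁ + 2 * D₂) / (2 * (D₁ + D₂))) * ustar
        + eps * D₂ * (Real.pi * (D₂ + 2 * D₁) / (2 * (D₁ + D₂))) * ustar) / 2) ^ 2 := by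
    have hid : D₁ * (1 + eps * (Real.pi / 2) * ustar
          - eps * (Real.pi * D₁ / (2 * (D₁ + D₂))) * ustar)
        * (D₂ * (1 + eps * (Real.pi / 2) * ustar
          - eps * (Real.pi * D₂ / (2 * (D₁ + D₂))) * ustar))
        - ((eps * D₁ * (Real.pi * (D₁ + 2 * D₂) / (2 * (D₁ + D₂))) * ustar
          + eps * D₂ * (Real.pi * (D₂ + 2 * D₁) / (2 * (D₁ + D₂))) * ustar) / 2) ^ 2
        = D₁ * D₂ + D₁ * D₂ * (eps * Real.pi * ustar) / 2
          - (eps * Real.pi * ustar) ^ 2 * (D₁ ^ 2 + D₂ ^ 2 + 6 * D₁ * D₂) / 16 := by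
      field_simp
      ring
    rw [hid]
    linarith
  rw [h𝔇, sym_two_aux]
  have hPD := posDef_fin_two_aux hApos (by linarith [hdet] :
    0 < D₁ * (1 + eps * (Real.pi / 2) * ustar
        - eps * (Real.pi * D₁ / (2 * (D₁ + D₂))) * ustar)
      * (D₂ * (1 + eps * (Real.pi / 2) * ustar
        - eps * (Real.pi * D₂ / (2 * (D₁ + D₂))) * ustar))
      - ((eps * D₁ * (Real.pi * (D₁ + 2 * D₂) / (2 * (D₁ + D₂))) * ustar
        + eps * D₂ * (Real.pi * (D₂ + 2 * D₁) / (2 * (D₁ + D₂))) * ustar) / 2) ^ 2)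
  exact ⟨hPD, hPD.det_pos⟩
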